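/- arXiv:2202.01315 — 2 statements merged into one kernel-verified Lean document; each statement's English description precedes it below -/
import Mathlib

section
/- Let E be a real normed vector space and let f : E → ℝ be K-Lipschitz (with respect to the norm on E and the absolute value on ℝ). Let θ_full, θ_Z, θ_loo, I_ẑ, I_zi be elements of E, let N be a positive real number and C, C', M ≥ 0 real constants such that ‖θ_full − I_zi − θ_loo‖ ≤ C·M²/N and ‖θ_full − I_ẑ − θ_Z‖ ≤ C'·M²/N. Suppose further that a real number ℓ̃ satisfies |ℓ̃ − f(θ_loo)| ≤ |f(θ_Z + I_ẑ − I_zi) − f(θ_loo)|. Then |ℓ̃ − f(θ_loo)| ≤ K·(C + C')·M²/N. -/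
/-- Consistency of approximate full conformal prediction (direct approach):
if the approximate score `ℓt` is at least as accurate as the indirect
influence-function approximation, and the leave-one-out parameter estimation
errors satisfy the Giordano-style bounds, then the score approximation error
is at most `K·(C + C')·M²/N`. -/
theorem acp_consistency_direct {E : Type*} [NormedAddCommGroup E] [NormedSpace ℝ E]
    (K : NNReal) (f : E → ℝ) (hf : LipschitzWith K f)
    (θfull θZ θloo Iz Izi : E) (N C C' M : ℝ)
    (hN : 0 < N) (hC : 0 ≤ C) (hC' : 0 ≤ C') (hM : 0 ≤ M)
    (h1 : ‖θfull - Izi - θloo‖ ≤ C * M ^ 2 / N)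
    (h2 : ‖θfull - Iz - θZ‖ ≤ C' * M ^ 2 / N)
    (ℓt : ℝ)
    (h3 : |ℓt - f θloo| ≤ |f (θZ + Iz - Izi) - f θloo|) :
    |ℓt - f θloo| ≤ (K : ℝ) * (C + C') * M ^ 2 / N := by
  have hkey : ‖θZ + Iz - Izi - θloo‖ ≤ C * M ^ 2 / N + C' * M ^ 2 / N := by
    have h : θZ + Iz - Izi - θloo = (θfull - Izi - θloo) - (θfull - Iz - θZ) := by abel
    rw [h]
    exact le_trans (norm_sub_le _ _) (add_le_add h1 h2)
  have hlip : |f (θZ + Iz - Izi) - f θloo| ≤ (K : ℝ) * ‖θZ + Iz - Izi - θloo‖ := by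
    simpa [Real.dist_eq, dist_eq_norm] using hf.dist_le_mul (θZ + Iz - Izi) θloo
  have hK : (0:ℝ) ≤ K := K.coe_nonneg
  calc |ℓt - f θloo| ≤ |f (θZ + Iz - Izi) - f θloo| := h3
    _ ≤ (K : ℝ) * ‖θZ + Iz - Izi - θloo‖ := hlip
    _ ≤ (K : ℝ) * (C * M ^ 2 / N + C' * M ^ 2 / N) := by
        exact mul_le_mul_of_nonneg_left hkey hK
    _ = (K : ℝ) * (C + C') * M ^ 2 / N := by ring
end

section
/- Let N be a natural number, δ ≥ 0 a real number, and α, α̃ : Fin (N+1) → ℝ two families of nonconformity scores with distinguished test index j = N (the last index). Suppose |α̃(i) − α(i)| ≤ δ for every i ∈ Fin (N+1). Then the conformal p-values p = |{i : α(i) ≥ α(j)}| / (N+1) and p̃ = |{i : α̃(i) ≥ α̃(j)}| / (N+1) satisfy |p̃ − p| ≤ |{i : |α(i) − α(j)| ≤ 2δ}| / (N+1). -/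
/-- Quantitative closeness of conformal p-values: if the approximate scores are
uniformly within `δ` of the true scores, then the two p-values differ by at
most the fraction of indices whose true score lies within `2δ` of the test
score. -/
theorem acp_pvalue_close (N : ℕ) (δ : ℝ) (hδ : 0 ≤ δ) (α αt : Fin (N + 1) → ℝ)
    (h : ∀ i : Fin (N + 1), |αt i - α i| ≤ δ) :
    |((Finset.univ.filter fun i : Fin (N + 1) => αt i ≥ αt (Fin.last N)).card : ℝ) / (N + 1) -
        ((Finset.univ.filter fun i : Fin (N + 1) => α i ≥ α (Fin.last N)).card : ℝ) / (N + 1)| ≤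
      ((Finset.univ.filter fun i : Fin (N + 1) => |α i - α (Fin.last N)| ≤ 2 * δ).card : ℝ) /
        (N + 1) := by
  set j := Fin.last N
  set A := Finset.univ.filter fun i : Fin (N + 1) => αt i ≥ αt j with hA
  set B := Finset.univ.filter fun i : Fin (N + 1) => α i ≥ α j with hB
  set C := Finset.univ.filter fun i : Fin (N + 1) => |α i - α j| ≤ 2 * δ with hC
  have hpos : (0:ℝ) < (N:ℝ) + 1 := by positivity
  rw [div_sub_div_same, abs_div, abs_of_pos hpos]
  gcongr
  -- key: symmetric difference is contained in C
  have hsub1 : A \ B ⊆ C := by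
    intro i hi
    simp only [hA, hB, hC, Finset.mem_sdiff, Finset.mem_filter, Finset.mem_univ, true_and] at *
    obtain ⟨h1, h2⟩ := hi
    push_neg at h2
    have hj := abs_le.mp (h (j))
    have hii := abs_le.mp (h i)
    rw [abs_le]
    constructor <;> nlinarith [hj.1, hj.2, hii.1, hii.2]
  have hsub2 : B \ A ⊆ C := by
    intro i hi
    simp only [hA, hB, hC, Finset.mem_sdiff, Finset.mem_filter, Finset.mem_univ, true_and] at *
    obtain ⟨h1, h2⟩ := hi
    push_neg at h2
    have hj := abs_le.mp (h (j))
    have hii := abs_le.mp (h i)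
    rw [abs_le]
    constructor <;> nlinarith [hj.1, hj.2, hii.1, hii.2]
  have hsd : (A \ B) ∪ (B \ A) ⊆ C := Finset.union_subset hsub1 hsub2
  have hdisj : Disjoint (A \ B) (B \ A) := disjoint_sdiff_sdiff
  have hcard : (A \ B).card + (B \ A).card ≤ C.card := by
    rw [← Finset.card_union_of_disjoint hdisj]
    exact Finset.card_le_card hsd
  have h1 : A.card ≤ B.card + (A \ B).card := by
    calc A.card ≤ (B ∪ (A \ B)).card := Finset.card_le_card (by
          intro x hx
          by_cases hxB : x ∈ B
          · exact Finset.mem_union_left _ hxB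
          · exact Finset.mem_union_right _ (Finset.mem_sdiff.mpr ⟨hx, hxB⟩))
      _ ≤ B.card + (A \ B).card := Finset.card_union_le _ _
  have h2 : B.card ≤ A.card + (B \ A).card := by
    calc B.card ≤ (A ∪ (B \ A)).card := Finset.card_le_card (by
          intro x hx
          by_cases hxA : x ∈ A
          · exact Finset.mem_union_left _ hxA
          · exact Finset.mem_union_right _ (Finset.mem_sdiff.mpr ⟨hx, hxA⟩))
      _ ≤ A.card + (B \ A).card := Finset.card_union_le _ _
  rw [abs_sub_le_iff]
  constructor
  · have : A.card ≤ B.card + C.card := by omega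
    have := (Nat.cast_le (α := ℝ)).mpr this
    push_cast at this ⊢
    linarith
  · have : B.card ≤ A.card + C.card := by omega
    have := (Nat.cast_le (α := ℝ)).mpr this
    push_cast at this ⊢
    linarith
end
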